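/- For every real y with 0 ≤ y ≤ π, one has sin(y) ≤ y − y³/π². -/

import Mathlib

/-- For every real `y` with `0 ≤ y ≤ π`, one has `sin(y) ≤ y − y³/π²`. -/
theorem stmt7 (y : ℝ) (h0 : 0 ≤ y) (h1 : y ≤ Real.pi) :
    Real.sin y ≤ y - y ^ 3 / Real.pi ^ 2 := by
  have hpl : Real.pi > 3.141592 := Real.pi_gt_d6
  have hpu : Real.pi < 3.141593 := Real.pi_lt_d6
  have hp2 : (9.8695 : ℝ) ≤ Real.pi ^ 2 := by nlinarith
  have hp2pos : (0:ℝ) < Real.pi ^ 2 := by positivity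
  rcases le_or_gt y 2 with hy | hy
  · -- small case: half angle + Taylor bounds
    set u := y / 2 with hu
    have hu0 : 0 ≤ u := by positivity
    have hu1 : u ≤ 1 := by simp only [hu]; linarith
    have habs : |u| ≤ 1 := by rw [abs_of_nonneg hu0]; exact hu1
    have hs := abs_le.mp (Real.sin_bound habs)
    have hc := abs_le.mp (Real.cos_bound habs)
    rw [abs_of_nonneg hu0] at hs hc
    have hsin_nonneg : 0 ≤ Real.sin u := Real.sin_nonneg_of_nonneg_of_le_pi hu0 (by linarith)
    have hcos_nonneg : 0 ≤ Real.cos u := Real.cos_nonneg_of_mem_Icc ⟨by linarith, by linarith⟩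
    have hy2 : y = 2 * u := by rw [hu]; ring
    have hsy : Real.sin y = 2 * Real.sin u * Real.cos u := by
      rw [hy2, Real.sin_two_mul]
    have hS : Real.sin u ≤ u - u ^ 3 / 6 + u ^ 4 * (5 / 96) := by nlinarith [hs.2, mul_le_mul_of_nonneg_left hu1 (pow_nonneg hu0 4), pow_nonneg hu0 4]
    have hC : Real.cos u ≤ 1 - u ^ 2 / 2 + u ^ 4 * (5 / 96) := by linarith [hc.2]
    have hSnn : 0 ≤ u - u ^ 3 / 6 + u ^ 4 * (5 / 96) := le_trans hsin_nonneg hS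
    have key : Real.sin y ≤ 2 * u - (8 / 9.8695) * u ^ 3 := by
      rw [hsy]
      have hprod : Real.sin u * Real.cos u ≤
          (u - u ^ 3 / 6 + u ^ 4 * (5 / 96)) * (1 - u ^ 2 / 2 + u ^ 4 * (5 / 96)) := by
        calc Real.sin u * Real.cos u
            ≤ (u - u ^ 3 / 6 + u ^ 4 * (5 / 96)) * Real.cos u := by
              exact mul_le_mul_of_nonneg_right hS hcos_nonneg
          _ ≤ (u - u ^ 3 / 6 + u ^ 4 * (5 / 96)) * (1 - u ^ 2 / 2 + u ^ 4 * (5 / 96)) := by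
              exact mul_le_mul_of_nonneg_left hC hSnn
      nlinarith [hprod, sq_nonneg u, sq_nonneg (u^2), mul_nonneg hu0 hu0,
        mul_nonneg (mul_nonneg hu0 hu0) hu0, pow_le_one₀ hu0 hu1 (n := 2),
        mul_nonneg (mul_nonneg (mul_nonneg hu0 hu0) hu0) (sub_nonneg.mpr hu1),
        mul_nonneg (mul_nonneg (mul_nonneg (mul_nonneg hu0 hu0) hu0) hu0) (sub_nonneg.mpr hu1)]
    have hdiv : y ^ 3 / Real.pi ^ 2 ≤ y ^ 3 / 9.8695 := by
      apply div_le_div_of_nonneg_left (by positivity) (by norm_num) hp2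
    have : y ^ 3 / 9.8695 = (8 / 9.8695) * u ^ 3 := by rw [hy2]; ring
    linarith
  · rcases le_or_gt y 2.35 with hy' | hy'
    · -- middle case: sin y ≤ 1
      have hs1 : Real.sin y ≤ 1 := Real.sin_le_one y
      have hh1 : (0:ℝ) ≤ (y - 2) * (2.35 - y) :=
        mul_nonneg (sub_nonneg.mpr hy.le) (sub_nonneg.mpr hy')
      have hh2 : (0:ℝ) ≤ y * ((y - 2) * (2.35 - y)) := mul_nonneg h0 hh1
      have h3 : y ^ 3 ≤ 9.8695 * (y - 1) := by nlinarith [hh1, hh2]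
      have h4 : y ^ 3 / Real.pi ^ 2 ≤ y - 1 := by
        rw [div_le_iff₀ hp2pos]
        nlinarith [mul_le_mul_of_nonneg_left hp2 (by linarith : (0:ℝ) ≤ y - 1)]
      linarith
    · -- near π: symmetry
      set t := Real.pi - y with ht
      have ht0 : 0 ≤ t := by linarith
      have ht1 : t ≤ 0.7916 := by simp only [ht]; linarith
      have hsy : Real.sin y = Real.sin t := by
        rw [ht, Real.sin_pi_sub]
      have hst : Real.sin t ≤ t := Real.sin_le ht0
      rw [hsy]
      have hyt : y = Real.pi - t := by rw [ht]; ring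
      have h2 : y - y ^ 3 / Real.pi ^ 2 - t = t * (Real.pi ^ 2 - 3 * Real.pi * t + t ^ 2) / Real.pi ^ 2 := by
        rw [hyt]; field_simp; ring
      have hpos : 0 ≤ t * (Real.pi ^ 2 - 3 * Real.pi * t + t ^ 2) / Real.pi ^ 2 := by
        apply div_nonneg _ (le_of_lt hp2pos)
        apply mul_nonneg ht0
        nlinarith
      linarith
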